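/- Let l ≥ 1 and let h₁,…,h_l be nonzero integers. Then the Shannon entropy of h₁X₁+⋯+h_lX_l satisfies H(h₁X₁+⋯+h_lX_l) > (1/2)·log₂(πl/2). -/

import Mathlib

open scoped BigOperators

/-- Probability mass function of `h₁X₁+⋯+h_mX_m`, where `X₁,…,X_m` are independent and
uniform on `{0,1}`: `p_X(z) = 2^{-m}·|{ε ∈ {0,1}^m : ε₁h₁+⋯+ε_mh_m = z}|`. -/
noncomputable def pX {m : ℕ} (h : Fin m → ℤ) (z : ℤ) : ℝ :=
  ((Finset.univ.filter fun ε : Fin m → Bool =>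
      (∑ i ∈ Finset.univ.filter (fun i => ε i = true), h i) = z).card : ℝ) / 2 ^ m

/-- Shannon entropy of `h₁X₁+⋯+h_mX_m` (with `0·log₂ 0` interpreted as `0`). -/
noncomputable def entX {m : ℕ} (h : Fin m → ℤ) : ℝ :=
  -∑' z : ℤ, pX h z * Real.logb 2 (pX h z)


section CheapLOAux

open Stirling Real Finset Nat


private lemma sqrt_pi_lt_stirling (n : ℕ) : Real.sqrt π < stirlingSeq (n+1) := by
  have hle : Real.sqrt π ≤ stirlingSeq (n+2) := by
    have ht : Filter.Tendsto (stirlingSeq ∘ Nat.succ) Filter.atTop (nhds (Real.sqrt π)) :=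
      tendsto_stirlingSeq_sqrt_pi.comp (Filter.tendsto_add_atTop_nat 1)
    exact stirlingSeq'_antitone.le_of_tendsto ht (n+1)
  have hpos : 0 < Real.log (stirlingSeq (n+1)) - Real.log (stirlingSeq (n+2)) := by
    have hs := log_stirlingSeq_diff_hasSum n
    have h0 : (0:ℝ) < (1 : ℝ) / (2 * ((0:ℕ) + 1 : ℕ) + 1) *
        ((1 / (2 * ↑(n + 1) + 1)) ^ 2) ^ ((0:ℕ)+1 : ℕ) := by positivity
    calc (0:ℝ) < _ := h0
    _ ≤ _ := le_hasSum hs 0 (fun j _ => by positivity)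
  have hlt : stirlingSeq (n+2) < stirlingSeq (n+1) := by
    rw [← Real.log_lt_log_iff (stirlingSeq'_pos (n+1)) (stirlingSeq'_pos n)]
    linarith
  exact lt_of_le_of_lt hle hlt

private lemma stirling_antitone' {a b : ℕ} (h : a ≤ b) (ha : 1 ≤ a) :
    stirlingSeq b ≤ stirlingSeq a := by
  obtain ⟨a', rfl⟩ := Nat.exists_eq_add_of_le ha
  obtain ⟨b', rfl⟩ := Nat.exists_eq_add_of_le (le_trans ha h)
  have : a' ≤ b' := by omega
  simpa [Nat.add_comm, Nat.succ_eq_add_one] using stirlingSeq'_antitone this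

private lemma central_sq (n : ℕ) (hn : 1 ≤ n) :
    ((2*n).choose n : ℝ) * Real.sqrt (π * n) < 4 ^ n := by
  have hnR : (0:ℝ) < n := by exact_mod_cast hn
  set s := stirlingSeq with hs
  set A : ℝ := ((n:ℝ)/Real.exp 1)^n with hA
  have hApos : 0 < A := by positivity
  have hd : Real.sqrt (2*(n:ℝ)) * A ≠ 0 := by positivity
  have hF : ((n ! : ℕ) : ℝ) = s n * (Real.sqrt (2*(n:ℝ)) * A) := by
    rw [hs, stirlingSeq, hA, div_mul_cancel₀ _ hd]
  have hd2 : Real.sqrt (2*((2*n:ℕ):ℝ)) * (((2*n:ℕ):ℝ)/Real.exp 1)^(2*n) ≠ 0 := by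
    have : (0:ℝ) < ((2*n:ℕ):ℝ) := by positivity
    positivity
  have hG : (((2*n) ! : ℕ) : ℝ) =
      s (2*n) * (Real.sqrt (2*((2*n:ℕ):ℝ)) * (((2*n:ℕ):ℝ)/Real.exp 1)^(2*n)) := by
    rw [hs, stirlingSeq, div_mul_cancel₀ _ hd2]
  have h1 : (((2*n:ℕ):ℝ)/Real.exp 1)^(2*n) = 4^n * A^2 := by
    push_cast
    rw [show (2:ℝ)*(n:ℝ)/Real.exp 1 = 2*((n:ℝ)/Real.exp 1) by ring, mul_pow,
      show ((2:ℝ))^(2*n) = 4^n by rw [pow_mul]; norm_num, hA, ← pow_mul, mul_comm n 2]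
  have h2 : Real.sqrt (2*((2*n:ℕ):ℝ)) = 2 * Real.sqrt n := by
    push_cast
    rw [show (2:ℝ)*(2*(n:ℝ)) = 2^2*(n:ℝ) by ring, Real.sqrt_mul (by positivity),
      Real.sqrt_sq (by norm_num)]
  have hCF : ((2*n).choose n : ℝ) * ((n ! : ℕ) : ℝ) * ((n ! : ℕ) : ℝ) = (((2*n)! : ℕ) : ℝ) := by
    have h0 := Nat.choose_mul_factorial_mul_factorial (show n ≤ 2*n by omega)
    rw [show 2*n-n = n from by omega] at h0
    exact_mod_cast congrArg (Nat.cast : ℕ → ℝ) h0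
  obtain ⟨m, rfl⟩ : ∃ m, n = m + 1 := ⟨n - 1, by omega⟩
  have hsnpos : 0 < s (m+1) := stirlingSeq'_pos m
  have key : s (2*(m+1)) * Real.sqrt π < s (m+1) * s (m+1) := by
    calc s (2*(m+1)) * Real.sqrt π ≤ s (m+1) * Real.sqrt π :=
          mul_le_mul_of_nonneg_right (stirling_antitone' (by omega) (by omega))
            (Real.sqrt_nonneg _)
    _ < s (m+1) * s (m+1) :=
          mul_lt_mul_of_pos_left (sqrt_pi_lt_stirling m) hsnpos
  set n := m + 1
  have hFF : (0:ℝ) < ((n ! : ℕ) : ℝ) * ((n ! : ℕ) : ℝ) := by positivity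
  rw [← mul_lt_mul_iff_of_pos_right hFF]
  have e1 : Real.sqrt (n:ℝ) * Real.sqrt (n:ℝ) = (n:ℝ) := Real.mul_self_sqrt (by positivity)
  have lhs_eq : ((2*n).choose n : ℝ) * Real.sqrt (π * n) * (((n ! : ℕ) : ℝ) * ((n ! : ℕ) : ℝ))
      = (s (2*n) * Real.sqrt π) * (2*(n:ℝ)*(4^n*A^2)) := by
    rw [show ((2*n).choose n : ℝ) * Real.sqrt (π * n) * (((n ! : ℕ) : ℝ) * ((n ! : ℕ) : ℝ))
        = (((2*n).choose n : ℝ) * ((n ! : ℕ) : ℝ) * ((n ! : ℕ) : ℝ)) * Real.sqrt (π * n) by ring,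
      hCF, hG, h1, h2, Real.sqrt_mul pi_nonneg]
    linear_combination (2 * s (2*n) * 4^n * A^2 * Real.sqrt π) * e1
  have e2 : Real.sqrt (2*(n:ℝ)) * Real.sqrt (2*(n:ℝ)) = 2*(n:ℝ) :=
    Real.mul_self_sqrt (by positivity)
  have rhs_eq : (4:ℝ)^n * (((n ! : ℕ) : ℝ) * ((n ! : ℕ) : ℝ))
      = (s n * s n) * (2*(n:ℝ)*(4^n*A^2)) := by
    rw [hF]
    linear_combination ((4:ℝ)^n * A^2 * s n * s n) * e2
  rw [lhs_eq, rhs_eq]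
  exact mul_lt_mul_of_pos_right key (by positivity)

private lemma choose_sq_lt (n : ℕ) (hn : 1 ≤ n) :
    ((2*n).choose n : ℝ)^2 * (π * n) < ((4:ℝ)^n)^2 := by
  have h := central_sq n hn
  have hC : (0:ℝ) ≤ ((2*n).choose n : ℝ) * Real.sqrt (π * n) := by positivity
  have h3 := mul_self_lt_mul_self hC h
  have h2 : Real.sqrt (π*(n:ℝ)) * Real.sqrt (π*(n:ℝ)) = π * n :=
    Real.mul_self_sqrt (by positivity)
  calc ((2*n).choose n : ℝ)^2 * (π * n)
      = (((2*n).choose n : ℝ) * Real.sqrt (π * n)) * (((2*n).choose n : ℝ) * Real.sqrt (π * n)) := by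
        rw [show (((2*n).choose n : ℝ) * Real.sqrt (π * n)) * (((2*n).choose n : ℝ) * Real.sqrt (π * n))
          = ((2*n).choose n : ℝ)^2 * (Real.sqrt (π*(n:ℝ)) * Real.sqrt (π*(n:ℝ))) by ring, h2]
    _ < 4^n * 4^n := h3
    _ = ((4:ℝ)^n)^2 := (sq _).symm

private lemma pi_l_choose_sq_lt (l : ℕ) (hl : 1 ≤ l) :
    π * l * ((l.choose (l/2) : ℝ))^2 < 2 * 4 ^ l := by
  rcases Nat.even_or_odd l with ⟨n, rfl⟩ | ⟨n, rfl⟩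
  · -- l = n + n = 2n
    have hn : 1 ≤ n := by omega
    have hsq := choose_sq_lt n hn
    have hll : n + n = 2*n := by ring
    rw [hll, show (2*n)/2 = n from by omega]
    push_cast
    rw [show (4:ℝ)^(2*n) = (4^n)^2 by rw [← pow_mul, mul_comm]]
    nlinarith [hsq]
  · -- l = 2n+1
    rcases Nat.eq_zero_or_pos n with rfl | hn
    · norm_num
      nlinarith [Real.pi_lt_d2]
    have hsq := choose_sq_lt n hn
    have hrel : ((n:ℝ)+1) * ((2*n+1).choose n : ℝ) = (2*(n:ℝ)+1) * ((2*n).choose n : ℝ) := by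
      have h1 := Nat.add_one_mul_choose_eq (2*n) n
      have h2 : (2*n+1).choose ((2*n+1) - (n+1)) = (2*n+1).choose (n+1) :=
        Nat.choose_symm (by omega)
      rw [show (2*n+1) - (n+1) = n from by omega] at h2
      have h3 : (n+1) * ((2*n+1).choose n) = (2*n+1) * ((2*n).choose n) := by
        have h1' : (2*n+1) * ((2*n).choose n) = ((2*n+1).choose (n+1)) * (n+1) := by
          simpa [Nat.succ_eq_add_one] using h1
        rw [h1', ← h2]; ring
      exact_mod_cast congrArg (Nat.cast : ℕ → ℝ) h3
    have hrel2 : ((n:ℝ)+1)^2 * ((2*n+1).choose n : ℝ)^2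
        = (2*(n:ℝ)+1)^2 * ((2*n).choose n : ℝ)^2 := by
      linear_combination (((n:ℝ)+1) * ((2*n+1).choose n : ℝ)
        + (2*(n:ℝ)+1) * ((2*n).choose n : ℝ)) * hrel
    have hcube : ((2*(n:ℝ)+1))^3 ≤ 8 * n * ((n:ℝ)+1)^2 := by
      have h4 : (2*n+1)^3 ≤ 8 * n * (n+1)^2 := by nlinarith [hn]
      exact_mod_cast h4
    rw [show (2*n+1)/2 = n from by omega]
    push_cast
    rw [show (4:ℝ)^(2*n+1) = 4*(4^n)^2 by rw [pow_succ, ← pow_mul, mul_comm n 2]; ring]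
    have hnR : (0:ℝ) < n := by exact_mod_cast hn
    set Q : ℝ := ((4:ℝ)^n)^2 with hQ
    have hQpos : 0 < Q := by positivity
    have p1 : (((2*n).choose n : ℝ)^2 * (π * n)) * ((2*(n:ℝ)+1)^3)
        < Q * ((2*(n:ℝ)+1)^3) := mul_lt_mul_of_pos_right hsq (by positivity)
    have p2 : ((2*(n:ℝ)+1))^3 * Q ≤ (8*(n:ℝ)*((n:ℝ)+1)^2) * Q :=
      mul_le_mul_of_nonneg_right hcube hQpos.le
    rw [← mul_lt_mul_iff_of_pos_right (show (0:ℝ) < (n:ℝ)*((n:ℝ)+1)^2 by positivity)]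
    have hL : (π*(2*(n:ℝ)+1)*((2*n+1).choose n : ℝ)^2)*((n:ℝ)*((n:ℝ)+1)^2)
        = (((2*n).choose n : ℝ)^2 * (π*(n:ℝ)))*((2*(n:ℝ)+1)^3) := by
      linear_combination (π*(2*(n:ℝ)+1)*(n:ℝ)) * hrel2
    have hR : (2*(4*Q))*((n:ℝ)*((n:ℝ)+1)^2) = (8*(n:ℝ)*((n:ℝ)+1)^2)*Q := by ring
    rw [hL, hR]
    calc (((2*n).choose n : ℝ)^2 * (π*(n:ℝ)))*((2*(n:ℝ)+1)^3)
        < Q * ((2*(n:ℝ)+1)^3) := p1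
      _ = ((2*(n:ℝ)+1))^3 * Q := by ring
      _ ≤ (8*(n:ℝ)*((n:ℝ)+1)^2)*Q := p2



private lemma card_fiber_le (l : ℕ) (h : Fin l → ℤ) (hh : ∀ i, h i ≠ 0) (z : ℤ) :
    (Finset.univ.filter fun ε : Fin l → Bool =>
      (∑ i ∈ Finset.univ.filter (fun i => ε i = true), h i) = z).card ≤ l.choose (l/2) := by
  classical
  set σ : (Fin l → Bool) → Finset (Fin l) :=
    fun ε => Finset.univ.filter (fun i => ε i ≠ decide (h i < 0)) with hσ
  have hσinj : Function.Injective σ := by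
    intro ε ε' he
    funext i
    have h1 : (ε i ≠ decide (h i < 0)) ↔ (ε' i ≠ decide (h i < 0)) := by
      constructor
      · intro hi
        have : i ∈ σ ε := by simp [hσ, hi]
        rw [he] at this
        simpa [hσ] using this
      · intro hi
        have : i ∈ σ ε' := by simp [hσ, hi]
        rw [← he] at this
        simpa [hσ] using this
    revert h1
    cases ε i <;> cases ε' i <;> cases (decide (h i < 0)) <;> simp
  set N : ℤ := ∑ i ∈ Finset.univ.filter (fun i : Fin l => h i < 0), h i with hN
  have hsum : ∀ ε : Fin l → Bool,
      ∑ i ∈ σ ε, |h i| = (∑ i ∈ Finset.univ.filter (fun i => ε i = true), h i) - N := by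
    intro ε
    rw [hσ, hN, Finset.sum_filter, Finset.sum_filter, Finset.sum_filter, ← Finset.sum_sub_distrib]
    apply Finset.sum_congr rfl
    intro i _
    rcases lt_trichotomy (h i) 0 with hi | hi | hi
    · cases hε : ε i <;> simp [hi, abs_of_neg hi, hε]
    · exact absurd hi (hh i)
    · cases hε : ε i <;> simp [hi, not_lt.2 hi.le, abs_of_pos hi, hε]
  set 𝒜 : Finset (Finset (Fin l)) :=
    (Finset.univ.filter fun ε : Fin l → Bool =>
      (∑ i ∈ Finset.univ.filter (fun i => ε i = true), h i) = z).image σ with h𝒜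
  have hanti : IsAntichain (· ⊆ ·) (𝒜 : Set (Finset (Fin l))) := by
    intro S hS T hT hne hsub
    simp only [h𝒜, coe_image, Set.mem_image, mem_coe, mem_filter] at hS hT
    obtain ⟨ε, hε, rfl⟩ := hS
    obtain ⟨ε', hε', rfl⟩ := hT
    have hS' := hsum ε
    have hT' := hsum ε'
    rw [hε.2] at hS'
    rw [hε'.2] at hT'
    have hdiff : ∑ i ∈ σ ε' \ σ ε, |h i| = 0 := by
      rw [Finset.sum_sdiff_eq_sub hsub, hS', hT', sub_self]
    have hempty : σ ε' \ σ ε = ∅ := by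
      by_contra hne'
      obtain ⟨j, hj⟩ := Finset.nonempty_iff_ne_empty.2 hne'
      have : 0 < ∑ i ∈ σ ε' \ σ ε, |h i| :=
        Finset.sum_pos (fun i _ => abs_pos.2 (hh i)) ⟨j, hj⟩
      omega
    have : σ ε' ⊆ σ ε := by
      intro x hx
      by_contra hx'
      have : x ∈ σ ε' \ σ ε := Finset.mem_sdiff.2 ⟨hx, hx'⟩
      simp [hempty] at this
    exact hne (Finset.Subset.antisymm hsub this)
  have hcard := IsAntichain.sperner hanti
  rw [h𝒜, Finset.card_image_of_injective _ hσinj] at hcard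
  simpa using hcard

end CheapLOAux

theorem cheap_entropy_littlewood_offord (l : ℕ) (hl : 1 ≤ l)
    (h : Fin l → ℤ) (hh : ∀ i, h i ≠ 0) :
    (1 / 2) * Real.logb 2 (Real.pi * (l : ℝ) / 2) < entX h := by
  classical
  set Z : Finset ℤ :=
    Finset.image (fun ε : Fin l → Bool =>
      ∑ i ∈ Finset.univ.filter (fun i => ε i = true), h i) Finset.univ with hZ
  have hzero : ∀ z ∉ Z, pX h z = 0 := by
    intro z hz
    simp only [hZ, Finset.mem_image, Finset.mem_univ, true_and, not_exists] at hz
    unfold pX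
    rw [Finset.filter_eq_empty_iff.mpr (fun ε _ => hz ε), Finset.card_empty]
    norm_num
  have hnonneg : ∀ z, 0 ≤ pX h z := by
    intro z; unfold pX; positivity
  set M : ℝ := (l.choose (l/2) : ℝ) / 2 ^ l with hM
  have hMpos : 0 < M := by
    apply div_pos _ (by positivity)
    exact_mod_cast Nat.choose_pos (Nat.div_le_self l 2)
  have hple : ∀ z, pX h z ≤ M := by
    intro z
    unfold pX
    rw [hM]
    gcongr
    exact_mod_cast card_fiber_le l h hh z
  have hsum1 : ∑ z ∈ Z, pX h z = 1 := by
    unfold pX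
    rw [← Finset.sum_div]
    have hcards : (Finset.univ : Finset (Fin l → Bool)).card
        = ∑ z ∈ Z, (Finset.univ.filter fun ε : Fin l → Bool =>
            (∑ i ∈ Finset.univ.filter (fun i => ε i = true), h i) = z).card :=
      Finset.card_eq_sum_card_fiberwise
        (fun ε _ => Finset.mem_image_of_mem _ (Finset.mem_univ ε))
    have h2l : ((Finset.univ : Finset (Fin l → Bool)).card : ℝ) = 2 ^ l := by
      rw [Finset.card_univ]
      simp
    rw [show (∑ z ∈ Z, ((Finset.univ.filter fun ε : Fin l → Bool =>
        (∑ i ∈ Finset.univ.filter (fun i => ε i = true), h i) = z).card : ℝ))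
        = ((Finset.univ : Finset (Fin l → Bool)).card : ℝ) by exact_mod_cast hcards.symm, h2l]
    exact div_self (by positivity)
  have hfin : ∑' z : ℤ, pX h z * Real.logb 2 (pX h z)
      = ∑ z ∈ Z, pX h z * Real.logb 2 (pX h z) :=
    tsum_eq_sum (fun z hz => by rw [hzero z hz]; simp)
  have hbound : ∑ z ∈ Z, pX h z * Real.logb 2 (pX h z)
      ≤ ∑ z ∈ Z, pX h z * Real.logb 2 M := by
    apply Finset.sum_le_sum
    intro z _
    rcases eq_or_lt_of_le (hnonneg z) with he | hp
    · rw [← he]; simp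
    · exact mul_le_mul_of_nonneg_left
        (Real.logb_le_logb_of_le (by norm_num) hp (hple z)) (hnonneg z)
  have hsumM : ∑ z ∈ Z, pX h z * Real.logb 2 M = Real.logb 2 M := by
    rw [← Finset.sum_mul, hsum1, one_mul]
  have hlR : (0:ℝ) < (l:ℝ) := by exact_mod_cast hl
  have hpl : (0:ℝ) < Real.pi * l := by positivity
  have hMlt : M < Real.sqrt (2/(Real.pi*l)) := by
    rw [Real.lt_sqrt hMpos.le]
    rw [hM, div_pow, div_lt_div_iff₀ (by positivity) hpl]
    have h4 : ((2:ℝ)^l)^2 = 4^l := by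
      rw [← pow_mul, mul_comm, pow_mul]; norm_num
    rw [h4]
    have := pi_l_choose_sq_lt l hl
    nlinarith [this]
  have hlog : Real.logb 2 M < Real.logb 2 (Real.sqrt (2/(Real.pi*l))) :=
    Real.logb_lt_logb (by norm_num) hMpos hMlt
  have hsqrtlog : Real.logb 2 (Real.sqrt (2/(Real.pi*l)))
      = -((1/2) * Real.logb 2 (Real.pi*l/2)) := by
    rw [Real.logb, Real.logb, Real.log_sqrt (by positivity),
      show (2:ℝ)/(Real.pi*l) = (Real.pi*l/2)⁻¹ by field_simp, Real.log_inv]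
    ring
  rw [entX, hfin]
  have : Real.logb 2 M < -((1/2) * Real.logb 2 (Real.pi*l/2)) := hsqrtlog ▸ hlog
  have hml : Real.pi * (l:ℝ) / 2 = Real.pi * l / 2 := by ring
  linarith [hbound, hsumM ▸ hbound]
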